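/- Let (X, μ) be a probability space, Y a metric space, and (ψ_n)_{n∈ℕ} a sequence of measurable maps ψ_n : X → Y. Suppose that for every k ∈ ℕ the triplet (W^{(k)}, {n_i^{(k)}}, δ_k) is well behaved, where δ_k < 1/4 for all k and δ_k → 0 as k → ∞. Then for every ε > 0 there exist a measurable set K ⊆ ∩_{k∈ℕ} W^{(k)} with μ(K) > μ(∩_{k∈ℕ} W^{(k)}) − ε and measurable functions n_i : K → ℕ (i ∈ ℕ) such that the triplet (K, {n_i}, 0) is well behaved. -/

import Mathlib

open MeasureTheory Filter

/-- The lower density of a set `S ⊆ ℕ`: `liminf_{k→∞} #(S ∩ [1,k]) / k`. -/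
noncomputable def lowerDensity (S : Set ℕ) : ℝ :=
  Filter.liminf (fun k : ℕ => ((S ∩ Set.Icc 1 k).ncard : ℝ) / k) Filter.atTop

/-- The triplet `(W, {n i}, ε)` is *well behaved* for the sequence of maps `ψ`:
`W` is measurable, each `n i` is measurable on `W`, `i ↦ n i x` is strictly increasing,
the range `{n i x : i ∈ ℕ}` has lower density at least `1 − ε` for every `x ∈ W`, and
`ψ (n i x) x` converges, uniformly in `x ∈ W`, to some map `φ`. -/
def WellBehaved {X Y : Type*} [MeasurableSpace X] [MetricSpace Y]
    (ψ : ℕ → X → Y) (W : Set X) (n : ℕ → X → ℕ) (ε : ℝ) : Prop :=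
  MeasurableSet W ∧
  (∀ i, Measurable (W.restrict (n i))) ∧
  (∀ x ∈ W, StrictMono fun i => n i x) ∧
  (∀ x ∈ W, 1 - ε ≤ lowerDensity {m : ℕ | ∃ i, n i x = m}) ∧
  ∃ φ : X → Y, TendstoUniformlyOn (fun i x => ψ (n i x) x) φ atTop W

section Aux

private lemma ncard_Icc_nat (a b : ℕ) : (Set.Icc a b).ncard = b + 1 - a := by
  rw [← Finset.coe_Icc, Set.ncard_coe_finset, Nat.card_Icc]

private lemma ratio_le_one (S : Set ℕ) (T : ℕ) :
    ((S ∩ Set.Icc 1 T).ncard : ℝ) / T ≤ 1 := by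
  rcases Nat.eq_zero_or_pos T with h | h
  · simp [h]
  · rw [div_le_one (by exact_mod_cast h)]
    have : (S ∩ Set.Icc 1 T).ncard ≤ (Set.Icc 1 T).ncard :=
      Set.ncard_le_ncard Set.inter_subset_right (Set.finite_Icc 1 T)
    rw [ncard_Icc_nat] at this
    exact_mod_cast this.trans (by omega)

private lemma ratio_nonneg (S : Set ℕ) (T : ℕ) :
    (0:ℝ) ≤ ((S ∩ Set.Icc 1 T).ncard : ℝ) / T := by positivity

private lemma ratio_boundedUnder_ge (S : Set ℕ) :
    IsBoundedUnder (· ≥ ·) atTop (fun T : ℕ => ((S ∩ Set.Icc 1 T).ncard : ℝ) / T) :=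
  isBoundedUnder_of ⟨0, fun T => ratio_nonneg S T⟩

private lemma lowerDensity_le_one (S : Set ℕ) : lowerDensity S ≤ 1 :=
  liminf_le_of_frequently_le
    (Filter.Eventually.frequently (Filter.Eventually.of_forall fun T => ratio_le_one S T))
    (ratio_boundedUnder_ge S)

private lemma inter_infinite_of_lowerDensity {S S' : Set ℕ}
    (hS : 3/4 < lowerDensity S) (hS' : 3/4 < lowerDensity S') : (S ∩ S').Infinite := by
  by_contra hcon
  rw [Set.not_infinite] at hcon
  have hfin := hcon
  set C := (S ∩ S').ncard with hC
  have key : ∀ T : ℕ, ((S ∩ Set.Icc 1 T).ncard : ℝ) + (S' ∩ Set.Icc 1 T).ncard ≤ T + C := by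
    intro T
    have hfin1 : (S ∩ Set.Icc 1 T).Finite := (Set.finite_Icc 1 T).inter_of_right _
    have hfin2 : (S' ∩ Set.Icc 1 T).Finite := (Set.finite_Icc 1 T).inter_of_right _
    have h1 := Set.ncard_union_add_ncard_inter (S ∩ Set.Icc 1 T) (S' ∩ Set.Icc 1 T) hfin1 hfin2
    have h2 : ((S ∩ Set.Icc 1 T) ∪ (S' ∩ Set.Icc 1 T)).ncard ≤ T := by
      have := Set.ncard_le_ncard (by intro n hn; rcases hn with h | h <;> exact h.2)
        (Set.finite_Icc 1 T) (s := (S ∩ Set.Icc 1 T) ∪ (S' ∩ Set.Icc 1 T))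
      rw [ncard_Icc_nat] at this; omega
    have h3 : ((S ∩ Set.Icc 1 T) ∩ (S' ∩ Set.Icc 1 T)).ncard ≤ C := by
      apply Set.ncard_le_ncard _ hfin
      intro n hn; exact ⟨hn.1.1, hn.2.1⟩
    have : (S ∩ Set.Icc 1 T).ncard + (S' ∩ Set.Icc 1 T).ncard ≤ T + C := by omega
    exact_mod_cast this
  have e1 : ∀ᶠ T : ℕ in atTop, 3/4 < ((S ∩ Set.Icc 1 T).ncard : ℝ) / T :=
    eventually_lt_of_lt_liminf hS (ratio_boundedUnder_ge S)
  have e2 : ∀ᶠ T : ℕ in atTop, 3/4 < ((S' ∩ Set.Icc 1 T).ncard : ℝ) / T :=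
    eventually_lt_of_lt_liminf hS' (ratio_boundedUnder_ge S')
  have e3 : ∀ᶠ T : ℕ in atTop, (C : ℝ) / T < 1/4 :=
    (tendsto_const_div_atTop_nhds_zero_nat (C : ℝ)).eventually (gt_mem_nhds (by norm_num))
  have e4 : ∀ᶠ T : ℕ in atTop, 1 ≤ T := eventually_atTop.mpr ⟨1, fun T h => h⟩
  obtain ⟨T, ⟨⟨h1, h2⟩, h3⟩, h4⟩ := (((e1.and e2).and e3).and e4).exists
  have hTpos : (0:ℝ) < T := by exact_mod_cast h4
  have k := key T
  rw [lt_div_iff₀ hTpos] at h1 h2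
  rw [div_lt_iff₀ hTpos] at h3
  nlinarith

private lemma measurable_count {α : Type*} [MeasurableSpace α] {S : α → Set ℕ}
    [∀ x, DecidablePred (· ∈ S x)]
    (hS : ∀ n, MeasurableSet {x | n ∈ S x}) (n : ℕ) :
    Measurable fun x => Nat.count (· ∈ S x) n := by
  induction n with
  | zero => simp only [Nat.count_zero]; exact measurable_const
  | succ n ih =>
    have : (fun x => Nat.count (· ∈ S x) (n+1))
        = fun x => Nat.count (· ∈ S x) n + if n ∈ S x then 1 else 0 := by
      funext x; rw [Nat.count_succ]
    rw [this]
    exact ih.add (Measurable.ite (hS n) measurable_const measurable_const)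

private lemma measurable_nth {α : Type*} [MeasurableSpace α] {S : α → Set ℕ}
    (hS : ∀ n, MeasurableSet {x | n ∈ S x}) (hinf : ∀ x, (S x).Infinite) (i : ℕ) :
    Measurable fun x => Nat.nth (· ∈ S x) i := by
  classical
  apply measurable_to_countable'
  intro n
  have hset : ∀ x, (setOf (· ∈ S x)).Infinite := fun x => by
    exact hinf x
  have : (fun x => Nat.nth (· ∈ S x) i) ⁻¹' {n}
      = {x | n ∈ S x} ∩ (fun x => Nat.count (· ∈ S x) n) ⁻¹' {i} := by
    ext x
    simp only [Set.mem_preimage, Set.mem_singleton_iff, Set.mem_inter_iff, Set.mem_setOf_eq]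
    constructor
    · rintro rfl
      exact ⟨Nat.nth_mem_of_infinite (hset x) i, Nat.count_nth_of_infinite (hset x) i⟩
    · rintro ⟨h1, h2⟩
      rw [← h2]
      exact Nat.nth_count h1
  rw [this]
  exact (hS n).inter ((measurable_count hS n) (measurableSet_singleton i))

private lemma measurable_ncard_inter {α : Type*} [MeasurableSpace α] {G : α → Set ℕ}
    (hG : ∀ n, MeasurableSet {x | n ∈ G x}) (T : ℕ) :
    Measurable fun x => (G x ∩ Set.Icc 1 T).ncard := by
  classical
  have h : (fun x => (G x ∩ Set.Icc 1 T).ncard)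
      = fun x => ∑ n ∈ Finset.Icc 1 T, if n ∈ G x then 1 else 0 := by
    funext x
    rw [← Finset.card_filter, ← Set.ncard_coe_finset]
    congr 1
    ext n
    simp only [Finset.coe_filter, Finset.mem_Icc, Set.mem_setOf_eq, Set.mem_inter_iff,
      Set.mem_Icc]
    tauto
  rw [h]
  exact Finset.measurable_sum _ fun n _ =>
    Measurable.ite (hG n) measurable_const measurable_const

end Aux

/-- Gluing lemma for well-behaved triplets (abstract form of Lemma 10.5). -/
theorem gluing_well_behaved
    {X Y : Type*} [MeasurableSpace X] [MetricSpace Y] [MeasurableSpace Y] [BorelSpace Y]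
    (μ : Measure X) [IsProbabilityMeasure μ]
    (ψ : ℕ → X → Y) (hψ : ∀ k, Measurable (ψ k))
    (W : ℕ → Set X) (nseq : ℕ → ℕ → X → ℕ) (δ : ℕ → ℝ)
    (hδlt : ∀ k, δ k < 1 / 4)
    (hδ0 : Tendsto δ atTop (nhds 0))
    (hwb : ∀ k, WellBehaved ψ (W k) (nseq k) (δ k)) :
    ∀ ε > (0 : ℝ), ∃ (K : Set X) (m : ℕ → X → ℕ),
      K ⊆ ⋂ k, W k ∧
      (μ (⋂ k, W k)).toReal - ε < (μ K).toReal ∧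
      WellBehaved ψ K m 0 := by
  
  classical
  intro ε hε
  have hWmeas : ∀ k, MeasurableSet (W k) := fun k => (hwb k).1
  have hnmeas : ∀ k i, Measurable ((W k).restrict (nseq k i)) := fun k => (hwb k).2.1
  have hdens : ∀ k, ∀ x ∈ W k, 1 - δ k ≤ lowerDensity {m : ℕ | ∃ i, nseq k i x = m} :=
    fun k => (hwb k).2.2.2.1
  choose φ hφ using fun k => (hwb k).2.2.2.2
  set K0 : Set X := ⋂ k, W k with hK0def
  have hK0meas : MeasurableSet K0 := MeasurableSet.iInter fun k => hWmeas k
  have hKsubW : ∀ k, K0 ⊆ W k := fun k => Set.iInter_subset W k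
  by_cases hKe : K0 = ∅
  · refine ⟨∅, fun i _ => i, by simp, ?_, ?_⟩
    · rw [hKe]
      simp only [measure_empty, ENNReal.toReal_zero]
      linarith
    · refine ⟨MeasurableSet.empty, fun i => ?_, fun x hx => absurd hx (Set.notMem_empty x),
        fun x hx => absurd hx (Set.notMem_empty x),
        ⟨fun x => ψ 0 x, tendstoUniformlyOn_empty⟩⟩
      have : IsEmpty (↥(∅ : Set X)) := by
        constructor; rintro ⟨x, hx⟩; exact (Set.notMem_empty x) hx
      exact measurable_of_empty _
  obtain ⟨x₀, hx₀⟩ := Set.nonempty_iff_ne_empty.mpr hKe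
  have hδnn : ∀ k, 0 ≤ δ k := by
    intro k
    have h1 := hdens k x₀ (hKsubW k hx₀)
    have h2 := lowerDensity_le_one {m : ℕ | ∃ i, nseq k i x₀ = m}
    linarith
  set γ : ℕ → ℝ := fun k => δ k + 1 / (k + 1) with hγdef
  have hγpos : ∀ k, 0 < γ k := by
    intro k; have := hδnn k
    have : (0:ℝ) < 1 / (k+1) := by positivity
    simp only [hγdef]; linarith [hδnn k]
  have hγ0 : Tendsto γ atTop (nhds 0) := by
    rw [hγdef]
    have := hδ0.add tendsto_one_div_add_atTop_nhds_zero_nat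
    simpa using this
  -- uniform convergence indices
  have hIex : ∀ k, ∃ I, ∀ i ≥ I, ∀ x ∈ W k, dist (φ k x) (ψ (nseq k i x) x) < 1 / (k + 1) := by
    intro k
    exact eventually_atTop.mp ((Metric.tendstoUniformlyOn_iff.mp (hφ k)) (1/(k+1)) (by positivity))
  choose Ifun hIfun using hIex
  set Gk : ℕ → X → Set ℕ := fun k x => {n | ∃ i, Ifun k ≤ i ∧ nseq k i x = n} with hGkdef
  set R : ℕ → X → Set ℕ := fun k x => {n | ∃ i, nseq k i x = n} with hRdef
  have hRdens : ∀ k, ∀ x ∈ K0, 3/4 < lowerDensity (R k x) := by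
    intro k x hx
    have h1 := hdens k x (hKsubW k hx)
    have h2 := hδlt k
    have : R k x = {m : ℕ | ∃ i, nseq k i x = m} := rfl
    rw [this]; linarith
  -- eventual counting bound for the tail ranges Gk
  have hGbound : ∀ k, ∀ x ∈ K0, ∀ᶠ T : ℕ in atTop,
      (1 - γ k) * T ≤ ((Gk k x ∩ Set.Icc 1 T).ncard : ℝ) := by
    intro k x hx
    have hld := hdens k x (hKsubW k hx)
    have ha : 1 - δ k - 1/(2*(k+1)) < lowerDensity (R k x) := by
      have hp : (0:ℝ) < 1/(2*(k+1)) := by positivity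
      have : R k x = {m : ℕ | ∃ i, nseq k i x = m} := rfl
      rw [this]; linarith
    unfold lowerDensity at ha
    have e1 := eventually_lt_of_lt_liminf ha (ratio_boundedUnder_ge (R k x))
    have e2 : ∀ᶠ T : ℕ in atTop, (Ifun k : ℝ) ≤ (1/(2*(k+1))) * T := by
      have ht : Tendsto (fun T : ℕ => (1/(2*((k:ℝ)+1))) * T) atTop atTop :=
        Tendsto.const_mul_atTop (by positivity) tendsto_natCast_atTop_atTop
      exact ht.eventually_ge_atTop _
    have e3 : ∀ᶠ T : ℕ in atTop, 1 ≤ T := eventually_ge_atTop 1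
    filter_upwards [e1, e2, e3] with T h1 h2 h3
    have hTpos : (0:ℝ) < T := by exact_mod_cast h3
    have hsub : R k x ∩ Set.Icc 1 T ⊆ (Gk k x ∩ Set.Icc 1 T) ∪
        (fun i => nseq k i x) '' Set.Iio (Ifun k) := by
      rintro n ⟨⟨i, hi⟩, hIcc⟩
      by_cases hc : Ifun k ≤ i
      · exact Or.inl ⟨⟨i, hc, hi⟩, hIcc⟩
      · exact Or.inr ⟨i, Set.mem_Iio.mpr (by omega), hi⟩
    have hcard : (R k x ∩ Set.Icc 1 T).ncard ≤ (Gk k x ∩ Set.Icc 1 T).ncard + Ifun k := by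
      have hfin1 : (Gk k x ∩ Set.Icc 1 T).Finite := (Set.finite_Icc 1 T).inter_of_right _
      have hfin2 : ((fun i => nseq k i x) '' Set.Iio (Ifun k)).Finite :=
        (Set.finite_Iio _).image _
      calc (R k x ∩ Set.Icc 1 T).ncard
          ≤ ((Gk k x ∩ Set.Icc 1 T) ∪ (fun i => nseq k i x) '' Set.Iio (Ifun k)).ncard :=
            Set.ncard_le_ncard hsub (hfin1.union hfin2)
        _ ≤ (Gk k x ∩ Set.Icc 1 T).ncard + ((fun i => nseq k i x) '' Set.Iio (Ifun k)).ncard :=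
            Set.ncard_union_le _ _
        _ ≤ (Gk k x ∩ Set.Icc 1 T).ncard + Ifun k := by
            have h4 : ((fun i => nseq k i x) '' Set.Iio (Ifun k)).ncard ≤ (Set.Iio (Ifun k)).ncard :=
              Set.ncard_image_le (Set.finite_Iio _)
            have h5 : (Set.Iio (Ifun k)).ncard = Ifun k := by
              rw [← Finset.coe_range, Set.ncard_coe_finset, Finset.card_range]
            omega
    rw [lt_div_iff₀ hTpos] at h1
    have hcard' : ((R k x ∩ Set.Icc 1 T).ncard : ℝ)
        ≤ ((Gk k x ∩ Set.Icc 1 T).ncard : ℝ) + Ifun k := by exact_mod_cast hcard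
    have hsplit : (1 - γ k) * (T:ℝ) = (1 - δ k - 1/(2*(k+1))) * T - (1/(2*(k+1))) * T := by
      have hk1 : ((k:ℝ)+1) ≠ 0 := by positivity
      simp only [hγdef]
      field_simp
      ring
    rw [hsplit]
    linarith
  -- the predicate and threshold function on the subtype of K0
  have hmeasK0 : ∀ k i, Measurable fun x : ↥K0 => nseq k i ↑x := by
    intro k i
    have hincl : Measurable fun x : ↥K0 => (⟨↑x, hKsubW k x.2⟩ : ↥(W k)) :=
      Measurable.subtype_mk measurable_subtype_coe
    exact (hnmeas k i).comp hincl
  have hGmemK0 : ∀ k n, MeasurableSet {x : ↥K0 | n ∈ Gk k ↑x} := by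
    intro k n
    have : {x : ↥K0 | n ∈ Gk k ↑x}
        = ⋃ i, ⋃ _ : Ifun k ≤ i, (fun x : ↥K0 => nseq k i ↑x) ⁻¹' {n} := by
      ext x
      simp only [hGkdef, Set.mem_setOf_eq, Set.mem_iUnion, Set.mem_preimage,
        Set.mem_singleton_iff]
      constructor
      · rintro ⟨i, h1, h2⟩; exact ⟨i, h1, h2⟩
      · rintro ⟨i, h1, h2⟩; exact ⟨i, h1, h2⟩
    rw [this]
    exact MeasurableSet.iUnion fun i => MeasurableSet.iUnion fun _ =>
      (hmeasK0 k i) (measurableSet_singleton n)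
  have hPex : ∀ k (x : ↥K0), ∃ t : ℕ, ∀ T, t ≤ T →
      (1 - γ k) * T ≤ ((Gk k ↑x ∩ Set.Icc 1 T).ncard : ℝ) :=
    fun k x => eventually_atTop.mp (hGbound k ↑x x.2)
  set Bfun : ℕ → ↥K0 → ℕ := fun k x => Nat.find (hPex k x) with hBdef
  have hBmeas : ∀ k, Measurable (Bfun k) := by
    intro k
    apply measurable_find
    intro t
    have : {x : ↥K0 | ∀ T, t ≤ T → (1 - γ k) * T ≤ ((Gk k ↑x ∩ Set.Icc 1 T).ncard : ℝ)}
        = ⋂ T, ⋂ _ : t ≤ T,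
          (fun x : ↥K0 => (Gk k ↑x ∩ Set.Icc 1 T).ncard) ⁻¹' {n : ℕ | (1 - γ k) * T ≤ (n:ℝ)} := by
      ext x
      simp only [Set.mem_setOf_eq, Set.mem_iInter, Set.mem_preimage]
    rw [this]
    exact MeasurableSet.iInter fun T => MeasurableSet.iInter fun _ =>
      (measurable_ncard_inter (fun n => hGmemK0 k n) T) ((Set.to_countable _).measurableSet)
  -- choice of the uniform bounds b k
  have hbex : ∀ k, ∃ bk : ℕ,
      μ (K0 \ Subtype.val '' (Bfun k ⁻¹' Set.Iic bk)) < ENNReal.ofReal (ε/2) * 2⁻¹^(k+1) := by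
    intro k
    set A : ℕ → Set X := fun bk => Subtype.val '' (Bfun k ⁻¹' Set.Iic bk) with hAdef
    have hAmeas : ∀ bk, MeasurableSet (A bk) :=
      fun bk => hK0meas.subtype_image ((hBmeas k) measurableSet_Iic)
    have hanti : Antitone fun bk => K0 \ A bk := by
      intro b1 b2 h
      apply Set.diff_subset_diff_right
      apply Set.image_mono
      apply Set.preimage_mono
      exact Set.Iic_subset_Iic.mpr h
    have hiInter : ⋂ bk, (K0 \ A bk) = ∅ := by
      ext x
      simp only [Set.mem_iInter, Set.mem_empty_iff_false, iff_false, not_forall]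
      by_cases hx : x ∈ K0
      · exact ⟨Bfun k ⟨x, hx⟩, fun hc => hc.2 ⟨⟨x, hx⟩, Set.mem_preimage.mpr (Set.mem_Iic.mpr (le_refl _)), rfl⟩⟩
      · exact ⟨0, fun hc => hx hc.1⟩
    have htend := tendsto_measure_iInter_atTop
      (fun bk => ((hK0meas.diff (hAmeas bk)).nullMeasurableSet)) hanti ⟨0, measure_ne_top μ _⟩
    rw [hiInter] at htend
    simp only [measure_empty] at htend
    have hpos : 0 < ENNReal.ofReal (ε/2) * 2⁻¹^(k+1) := by
      apply ENNReal.mul_pos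
      · simp only [ne_eq, ENNReal.ofReal_eq_zero, not_le]; linarith
      · exact pow_ne_zero _ (ENNReal.inv_ne_zero.mpr ENNReal.ofNat_ne_top)
    exact (htend.eventually_lt_const hpos).exists
  choose b hb using hbex
  set AA : ℕ → Set X := fun k => Subtype.val '' (Bfun k ⁻¹' Set.Iic (b k)) with hAAdef
  set K : Set X := ⋂ k, AA k with hKdef
  have hAAsub : ∀ k, AA k ⊆ K0 := by rintro k x ⟨y, _, rfl⟩; exact y.2
  have hKsub : K ⊆ K0 := (Set.iInter_subset AA 0).trans (hAAsub 0)
  have hKmeas : MeasurableSet K :=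
    MeasurableSet.iInter fun k => hK0meas.subtype_image ((hBmeas k) measurableSet_Iic)
  -- measure estimate
  have hmeasgoal : (μ K0).toReal - ε < (μ K).toReal := by
    have hdiff : K0 \ K = ⋃ k, (K0 \ AA k) := by
      ext x
      simp only [Set.mem_diff, hKdef, Set.mem_iInter, Set.mem_iUnion, not_forall]
      constructor
      · rintro ⟨h1, k, h2⟩; exact ⟨k, h1, h2⟩
      · rintro ⟨k, h1, h2⟩; exact ⟨h1, k, h2⟩
    have hgeom : (∑' k : ℕ, (2⁻¹ : ENNReal)^(k+1)) = 1 := by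
      calc (∑' k : ℕ, (2⁻¹ : ENNReal)^(k+1)) = ∑' k : ℕ, (2⁻¹ : ENNReal)^k * 2⁻¹ :=
            tsum_congr fun k => pow_succ _ _
        _ = (∑' k : ℕ, (2⁻¹ : ENNReal)^k) * 2⁻¹ := ENNReal.tsum_mul_right
        _ = (1 - 2⁻¹)⁻¹ * 2⁻¹ := by rw [ENNReal.tsum_geometric]
        _ = 1 := by
            rw [ENNReal.one_sub_inv_two, inv_inv]
            exact ENNReal.mul_inv_cancel two_ne_zero ENNReal.ofNat_ne_top
    have hsum : μ (K0 \ K) ≤ ENNReal.ofReal (ε/2) := by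
      rw [hdiff]
      calc μ (⋃ k, K0 \ AA k) ≤ ∑' k, μ (K0 \ AA k) := measure_iUnion_le _
        _ ≤ ∑' k, ENNReal.ofReal (ε/2) * 2⁻¹^(k+1) := ENNReal.tsum_le_tsum fun k => (hb k).le
        _ = ENNReal.ofReal (ε/2) * ∑' k : ℕ, (2⁻¹:ENNReal)^(k+1) := ENNReal.tsum_mul_left
        _ = ENNReal.ofReal (ε/2) := by rw [hgeom, mul_one]
    have h1 : μ K0 ≤ μ K + μ (K0 \ K) := by
      conv_lhs => rw [← Set.union_diff_cancel hKsub]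
      exact measure_union_le _ _
    have h2 : μ K0 ≤ μ K + ENNReal.ofReal (ε/2) := h1.trans (add_le_add le_rfl hsum)
    have h3 : (μ K0).toReal ≤ (μ K + ENNReal.ofReal (ε/2)).toReal := by
      apply ENNReal.toReal_mono _ h2
      exact ENNReal.add_ne_top.mpr ⟨measure_ne_top μ _, ENNReal.ofReal_ne_top⟩
    rw [ENNReal.toReal_add (measure_ne_top μ _) ENNReal.ofReal_ne_top,
      ENNReal.toReal_ofReal (by linarith)] at h3
    linarith
  -- deterministic thresholds
  set τ : ℕ → ℕ := fun k => Nat.rec (motive := fun _ => ℕ) 1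
    (fun k tk => max (max (tk+1) (max (b (k+1)) (b k + 1))) ⌈(tk:ℝ)/γ k⌉₊) k with hτdef
  have hτ0 : τ 0 = 1 := rfl
  have hτsucc : ∀ k, τ (k+1)
      = max (max (τ k + 1) (max (b (k+1)) (b k + 1))) ⌈(τ k:ℝ)/γ k⌉₊ := fun k => rfl
  have hτlt : ∀ k, τ k < τ (k+1) := by
    intro k
    rw [hτsucc]
    exact lt_of_lt_of_le (Nat.lt_succ_self _) ((le_max_left _ _).trans (le_max_left _ _))
  have hτmono : StrictMono τ := strictMono_nat_of_lt_succ hτlt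
  have hτge : ∀ k, k + 1 ≤ τ k := by
    intro k
    induction k with
    | zero => simp [hτ0]
    | succ k ih => have := hτlt k; omega
  have hτb1 : ∀ k, b (k+1) ≤ τ (k+1) := by
    intro k; rw [hτsucc]
    exact ((le_max_left _ _).trans (le_max_right _ _)).trans (le_max_left _ _)
  have hτb2 : ∀ k, b k + 1 ≤ τ (k+1) := by
    intro k; rw [hτsucc]
    exact ((le_max_right _ _).trans (le_max_right _ _)).trans (le_max_left _ _)
  have hτdiv : ∀ k, (τ k : ℝ) ≤ γ k * τ (k+1) := by
    intro k
    have h1 : ⌈(τ k:ℝ)/γ k⌉₊ ≤ τ (k+1) := by rw [hτsucc]; exact le_max_right _ _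
    have h2 : (τ k : ℝ)/γ k ≤ (⌈(τ k:ℝ)/γ k⌉₊ : ℝ) := Nat.le_ceil _
    have h3 : ((⌈(τ k:ℝ)/γ k⌉₊ : ℕ) : ℝ) ≤ ((τ (k+1) : ℕ) : ℝ) := by exact_mod_cast h1
    have h4 : (τ k : ℝ)/γ k ≤ τ (k+1) := h2.trans h3
    rw [div_le_iff₀ (hγpos k)] at h4
    linarith
  -- the glued set
  set S : X → Set ℕ := fun x => ⋃ k, Gk k x ∩ Set.Ico (τ k) (τ (k+1)) with hSdef
  -- counting bound available on K
  have hBK : ∀ k (x : X), x ∈ K → ∀ T, b k ≤ T →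
      (1 - γ k) * T ≤ ((Gk k x ∩ Set.Icc 1 T).ncard : ℝ) := by
    intro k x hx T hT
    have hx0 : x ∈ K0 := hKsub hx
    have hxA : x ∈ AA k := Set.mem_iInter.mp hx k
    obtain ⟨y, hy, hyx⟩ := hxA
    have hyx' : y = ⟨x, hx0⟩ := Subtype.ext hyx
    rw [hyx'] at hy
    have hspec := Nat.find_spec (hPex k ⟨x, hx0⟩)
    exact hspec T (le_trans (le_trans hy hT) (le_refl T))
  -- main counting estimate on K
  have hcount : ∀ x ∈ K, ∀ b' : ℝ, b' < 1 →
      ∀ᶠ T : ℕ in atTop, b' * T ≤ ((S x ∩ Set.Icc 1 T).ncard : ℝ) := by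
    intro x hx b' hb'
    have hγsm : ∀ᶠ k in atTop, γ k < (1 - b') / 4 :=
      hγ0.eventually_lt_const (by linarith)
    obtain ⟨k₀, hk₀⟩ := eventually_atTop.mp hγsm
    rw [eventually_atTop]
    refine ⟨max (τ (k₀+1)) (⌈(4:ℝ)/(1-b')⌉₊ + 1), fun T hT => ?_⟩
    have hT1 : τ (k₀+1) ≤ T := le_trans (le_max_left _ _) hT
    have hT2 : (4:ℝ)/(1-b') ≤ T := by
      have h5 : (⌈(4:ℝ)/(1-b')⌉₊ + 1 : ℕ) ≤ T := le_trans (le_max_right _ _) hT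
      have h6 : ((⌈(4:ℝ)/(1-b')⌉₊ : ℕ) : ℝ) ≤ T := by exact_mod_cast Nat.le_of_succ_le h5
      exact (Nat.le_ceil _).trans h6
    have hTpos : (0:ℝ) < T := by
      have := hτge (k₀+1); have : 1 ≤ T := by omega
      exact_mod_cast this
    -- locate the window
    obtain ⟨k, hkk₀, hTa, hTb⟩ : ∃ k, k₀ ≤ k ∧ τ (k+1) ≤ T ∧ T < τ (k+2) := by
      set j := Nat.findGreatest (fun j => τ j ≤ T) T with hj
      have hk₀T : k₀ + 1 ≤ T := by have := hτge (k₀+1); omega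
      have hjge : k₀ + 1 ≤ j := Nat.le_findGreatest hk₀T hT1
      have hjspec : τ j ≤ T := Nat.findGreatest_spec (P := fun j => τ j ≤ T) (m := k₀+1) hk₀T hT1
      have hjsucc : T < τ (j+1) := by
        by_cases hc : j + 1 ≤ T
        · have hgr := Nat.findGreatest_is_greatest (P := fun j => τ j ≤ T) (n := T)
            (by omega : Nat.findGreatest (fun j => τ j ≤ T) T < j + 1) hc
          omega
        · have := hτge (j+1); omega
      refine ⟨j - 1, by omega, ?_, ?_⟩
      · have : j - 1 + 1 = j := by omega
        rw [this]; exact hjspec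
      · have : j - 1 + 2 = j + 1 := by omega
        rw [this]; exact hjsucc
    set t1 := τ (k+1) with ht1def
    have ht1pos : 1 ≤ t1 := le_trans (by omega) (hτge (k+1))
    have hτkpos : 1 ≤ τ k := le_trans (by omega) (hτge k)
    have hτklt : τ k < t1 := hτlt k
    set A1 := Gk (k+1) x ∩ Set.Icc t1 T with hA1def
    set A2 := Gk k x ∩ Set.Icc (τ k) (t1 - 1) with hA2def
    have hfinA1 : A1.Finite := (Set.finite_Icc _ _).inter_of_right _
    have hfinA2 : A2.Finite := (Set.finite_Icc _ _).inter_of_right _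
    have hsub : A1 ∪ A2 ⊆ S x ∩ Set.Icc 1 T := by
      rintro n (⟨hG, hIcc⟩ | ⟨hG, hIcc⟩)
      · rw [Set.mem_Icc] at hIcc
        have hlt : n < τ (k+2) := by omega
        exact ⟨Set.mem_iUnion.mpr ⟨k+1, hG, Set.mem_Ico.mpr ⟨hIcc.1, hlt⟩⟩,
          Set.mem_Icc.mpr ⟨by omega, hIcc.2⟩⟩
      · rw [Set.mem_Icc] at hIcc
        refine ⟨Set.mem_iUnion.mpr ⟨k, hG, Set.mem_Ico.mpr ⟨hIcc.1, by omega⟩⟩,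
          Set.mem_Icc.mpr ⟨by omega, by omega⟩⟩
    have hdisj : Disjoint A1 A2 := by
      rw [Set.disjoint_left]
      rintro n ⟨_, hn1⟩ ⟨_, hn2⟩
      rw [Set.mem_Icc] at hn1 hn2
      omega
    have hA12 : A1.ncard + A2.ncard ≤ (S x ∩ Set.Icc 1 T).ncard := by
      rw [← Set.ncard_union_eq hdisj hfinA1 hfinA2]
      exact Set.ncard_le_ncard hsub ((Set.finite_Icc 1 T).inter_of_right _)
    have hsplitIcc : ∀ (G : Set ℕ) (u : ℕ), 1 ≤ u → u ≤ T + 1 →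
        (G ∩ Set.Icc 1 T).ncard = (G ∩ Set.Icc 1 (u-1)).ncard + (G ∩ Set.Icc u T).ncard := by
      intro G u hu1 hu2
      have hIcc : Set.Icc 1 T = Set.Icc 1 (u-1) ∪ Set.Icc u T := by
        ext n; simp only [Set.mem_Icc, Set.mem_union]; omega
      have hd : Disjoint (G ∩ Set.Icc 1 (u-1)) (G ∩ Set.Icc u T) := by
        rw [Set.disjoint_left]
        rintro n ⟨_, hn1⟩ ⟨_, hn2⟩
        rw [Set.mem_Icc] at hn1 hn2
        omega
      rw [← Set.ncard_union_eq hd ((Set.finite_Icc _ _).inter_of_right _)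
        ((Set.finite_Icc _ _).inter_of_right _), ← Set.inter_union_distrib_left, ← hIcc]
    have split1 := hsplitIcc (Gk (k+1) x) t1 ht1pos (by omega)
    have split2 : (Gk k x ∩ Set.Icc 1 (t1-1)).ncard
        = (Gk k x ∩ Set.Icc 1 (τ k - 1)).ncard + (Gk k x ∩ Set.Icc (τ k) (t1-1)).ncard := by
      have hIcc : Set.Icc 1 (t1-1) = Set.Icc 1 (τ k - 1) ∪ Set.Icc (τ k) (t1-1) := by
        ext n; simp only [Set.mem_Icc, Set.mem_union]; omega
      have hd : Disjoint (Gk k x ∩ Set.Icc 1 (τ k - 1)) (Gk k x ∩ Set.Icc (τ k) (t1-1)) := by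
        rw [Set.disjoint_left]
        rintro n ⟨_, hn1⟩ ⟨_, hn2⟩
        rw [Set.mem_Icc] at hn1 hn2
        omega
      rw [← Set.ncard_union_eq hd ((Set.finite_Icc _ _).inter_of_right _)
        ((Set.finite_Icc _ _).inter_of_right _), ← Set.inter_union_distrib_left, ← hIcc]
    -- quantitative bounds
    have hb1 : (1 - γ (k+1)) * T ≤ ((Gk (k+1) x ∩ Set.Icc 1 T).ncard : ℝ) :=
      hBK (k+1) x hx T (le_trans (hτb1 k) hTa)
    have hb2 : (1 - γ k) * ((t1:ℝ) - 1) ≤ ((Gk k x ∩ Set.Icc 1 (t1-1)).ncard : ℝ) := by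
      have hbk : b k ≤ t1 - 1 := by have := hτb2 k; omega
      have := hBK k x hx (t1-1) hbk
      have hcast : ((t1 - 1 : ℕ) : ℝ) = (t1:ℝ) - 1 := by
        rw [Nat.cast_sub ht1pos]; norm_num
      rwa [hcast] at this
    have hsmall1 : (Gk (k+1) x ∩ Set.Icc 1 (t1-1)).ncard ≤ t1 := by
      have h7 : (Gk (k+1) x ∩ Set.Icc 1 (t1-1)).ncard ≤ (Set.Icc 1 (t1-1)).ncard :=
        Set.ncard_le_ncard Set.inter_subset_right (Set.finite_Icc _ _)
      rw [ncard_Icc_nat] at h7; omega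
    have hsmall2 : (Gk k x ∩ Set.Icc 1 (τ k - 1)).ncard ≤ τ k := by
      have h7 : (Gk k x ∩ Set.Icc 1 (τ k - 1)).ncard ≤ (Set.Icc 1 (τ k - 1)).ncard :=
        Set.ncard_le_ncard Set.inter_subset_right (Set.finite_Icc _ _)
      rw [ncard_Icc_nat] at h7; omega
    -- assemble over ℝ
    have hγk := hk₀ k hkk₀
    have hγk1 := hk₀ (k+1) (by omega)
    have hγkpos := hγpos k
    have hγk1pos := hγpos (k+1)
    have hτdivk : (τ k : ℝ) ≤ γ k * t1 := hτdiv k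
    have ht1T : (t1 : ℝ) ≤ T := by exact_mod_cast hTa
    have hsum1 : ((Gk (k+1) x ∩ Set.Icc 1 T).ncard : ℝ)
        = ((Gk (k+1) x ∩ Set.Icc 1 (t1-1)).ncard : ℝ) + (A1.ncard : ℝ) := by
      exact_mod_cast congrArg (Nat.cast (R := ℝ)) split1
    have hsum2 : ((Gk k x ∩ Set.Icc 1 (t1-1)).ncard : ℝ)
        = ((Gk k x ∩ Set.Icc 1 (τ k - 1)).ncard : ℝ) + (A2.ncard : ℝ) := by
      exact_mod_cast congrArg (Nat.cast (R := ℝ)) split2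
    have hA12' : (A1.ncard : ℝ) + (A2.ncard : ℝ) ≤ ((S x ∩ Set.Icc 1 T).ncard : ℝ) := by
      exact_mod_cast hA12
    have hsmall1' : ((Gk (k+1) x ∩ Set.Icc 1 (t1-1)).ncard : ℝ) ≤ t1 := by exact_mod_cast hsmall1
    have hsmall2' : ((Gk k x ∩ Set.Icc 1 (τ k - 1)).ncard : ℝ) ≤ τ k := by exact_mod_cast hsmall2
    have p1 : γ (k+1) * T ≤ (1-b')/4 * T :=
      mul_le_mul_of_nonneg_right (le_of_lt hγk1) hTpos.le
    have p2 : γ k * t1 ≤ (1-b')/4 * T :=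
      le_trans (mul_le_mul_of_nonneg_left ht1T hγkpos.le)
        (mul_le_mul_of_nonneg_right (le_of_lt hγk) hTpos.le)
    have p3 : (4:ℝ) ≤ (1-b') * T := by
      rw [← div_le_iff₀' (by linarith)]
      exact hT2
    have eb1 : (1 - γ (k+1)) * (T:ℝ) = T - γ (k+1) * T := by ring
    have eb2 : (1 - γ k) * ((t1:ℝ) - 1) = (t1:ℝ) - 1 - γ k * t1 + γ k := by ring
    have key1 : (T:ℝ) - γ (k+1) * T - (t1:ℝ) ≤ (A1.ncard : ℝ) := by linarith
    have key2 : (t1:ℝ) - 1 - 2 * (γ k * t1) + γ k ≤ (A2.ncard : ℝ) := by linarith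
    clear_value t1 γ
    linarith only [key1, key2, hA12', p1, p2, p3, hγkpos.le]
  -- S x is infinite on K
  have hSinf : ∀ x ∈ K, (S x).Infinite := by
    intro x hx
    by_contra h
    rw [Set.not_infinite] at h
    have e1 := hcount x hx (1/2) (by norm_num)
    have e2 : ∀ᶠ T : ℕ in atTop, 2 * (S x).ncard + 1 ≤ T :=
      eventually_ge_atTop _
    obtain ⟨T, h1, h2⟩ := (e1.and e2).exists
    have h3 : (S x ∩ Set.Icc 1 T).ncard ≤ (S x).ncard :=
      Set.ncard_le_ncard Set.inter_subset_left h
    have h3' : ((S x ∩ Set.Icc 1 T).ncard : ℝ) ≤ ((S x).ncard : ℝ) := by exact_mod_cast h3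
    have h2' : 2 * ((S x).ncard : ℝ) + 1 ≤ T := by exact_mod_cast h2
    linarith
  -- agreement of the limits on K0
  have hagree : ∀ x ∈ K0, ∀ j, φ j x = φ 0 x := by
    intro x hx j
    have hinf := inter_infinite_of_lowerDensity (hRdens j x hx) (hRdens 0 x hx)
    by_contra hne
    have hdpos : 0 < dist (φ j x) (φ 0 x) := dist_pos.mpr hne
    set d := dist (φ j x) (φ 0 x) with hd
    obtain ⟨I0, hI0⟩ := eventually_atTop.mp
      ((Metric.tendstoUniformlyOn_iff.mp (hφ 0)) (d/2) (by positivity))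
    obtain ⟨Ij, hIj⟩ := eventually_atTop.mp
      ((Metric.tendstoUniformlyOn_iff.mp (hφ j)) (d/2) (by positivity))
    set F : Set ℕ := (fun i => nseq 0 i x) '' Set.Iio I0 ∪ (fun i => nseq j i x) '' Set.Iio Ij
      with hF
    have hFfin : F.Finite := ((Set.finite_Iio I0).image _).union ((Set.finite_Iio Ij).image _)
    obtain ⟨n, hn, hnF⟩ := (hinf.diff hFfin).nonempty
    obtain ⟨⟨ij, hij⟩, ⟨i0, hi0⟩⟩ := hn
    have hi0I : I0 ≤ i0 := by
      by_contra hc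
      push_neg at hc
      exact hnF (Or.inl ⟨i0, Set.mem_Iio.mpr hc, hi0⟩)
    have hijI : Ij ≤ ij := by
      by_contra hc
      push_neg at hc
      exact hnF (Or.inr ⟨ij, Set.mem_Iio.mpr hc, hij⟩)
    have d1 : dist (φ 0 x) (ψ n x) < d/2 := by
      rw [← hi0]; exact hI0 i0 hi0I x (hKsubW 0 hx)
    have d2 : dist (φ j x) (ψ n x) < d/2 := by
      rw [← hij]; exact hIj ij hijI x (hKsubW j hx)
    have htri : d ≤ dist (φ j x) (ψ n x) + dist (ψ n x) (φ 0 x) := dist_triangle _ _ _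
    rw [dist_comm (ψ n x)] at htri
    linarith
  -- conclusion
  refine ⟨K, fun i x => Nat.nth (· ∈ S x) i, hKsub.trans (by rw [hK0def]), hmeasgoal, ?_⟩
  have hsetinf : ∀ x ∈ K, (setOf (· ∈ S x)).Infinite := by
    intro x hx
    exact hSinf x hx
  refine ⟨hKmeas, ?_, ?_, ?_, ⟨φ 0, ?_⟩⟩
  · -- measurability
    intro i
    have hmem : ∀ n, MeasurableSet {x : ↥K | n ∈ S ↑x} := by
      intro n
      have heq : {x : ↥K | n ∈ S ↑x}
          = ⋃ k, ⋃ _ : n ∈ Set.Ico (τ k) (τ (k+1)),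
              ⋃ i', ⋃ _ : Ifun k ≤ i', (fun x : ↥K => nseq k i' ↑x) ⁻¹' {n} := by
        ext x
        simp only [hSdef, Set.mem_setOf_eq, Set.mem_iUnion, Set.mem_preimage,
          Set.mem_singleton_iff, Set.mem_inter_iff, hGkdef]
        constructor
        · rintro ⟨k, ⟨i', h1, h2⟩, h3⟩; exact ⟨k, h3, i', h1, h2⟩
        · rintro ⟨k, h3, i', h1, h2⟩; exact ⟨k, ⟨i', h1, h2⟩, h3⟩
      rw [heq]
      refine MeasurableSet.iUnion fun k => MeasurableSet.iUnion fun _ =>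
        MeasurableSet.iUnion fun i' => MeasurableSet.iUnion fun _ => ?_
      have hmK : Measurable fun x : ↥K => nseq k i' ↑x := by
        have hincl : Measurable fun x : ↥K => (⟨↑x, hKsubW k (hKsub x.2)⟩ : ↥(W k)) :=
          Measurable.subtype_mk measurable_subtype_coe
        exact (hnmeas k i').comp hincl
      exact hmK (measurableSet_singleton n)
    exact measurable_nth hmem (fun x => hSinf ↑x x.2) i
  · -- strict monotonicity
    intro x hx i j hij
    exact (Nat.nth_lt_nth (hsetinf x hx)).mpr hij
  · -- density one
    intro x hx
    have hrange : {m : ℕ | ∃ i, Nat.nth (· ∈ S x) i = m} = S x := by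
      ext n
      constructor
      · rintro ⟨i, rfl⟩
        exact Nat.nth_mem_of_infinite (hsetinf x hx) i
      · intro hn
        exact ⟨Nat.count (· ∈ S x) n, Nat.nth_count hn⟩
    rw [hrange]
    norm_num
    have hb' : ∀ b' : ℝ, b' < 1 → b' ≤ lowerDensity (S x) := by
      intro b' hb'
      apply le_liminf_of_le
      · exact (isBoundedUnder_of ⟨1, fun T => ratio_le_one (S x) T⟩).isCoboundedUnder_ge
      · have e3 : ∀ᶠ T : ℕ in atTop, 1 ≤ T := eventually_ge_atTop 1
        filter_upwards [hcount x hx b' hb', e3] with T h1 h3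
        have hTpos : (0:ℝ) < T := by exact_mod_cast h3
        rw [le_div_iff₀ hTpos]
        exact h1
    by_contra hcon
    push_neg at hcon
    have h8 := hb' ((1 + lowerDensity (S x))/2) (by linarith)
    linarith
  · -- uniform convergence
    rw [Metric.tendstoUniformlyOn_iff]
    intro η hη
    obtain ⟨kη, hkη⟩ := exists_nat_one_div_lt hη
    rw [eventually_atTop]
    refine ⟨τ kη, fun i hi x hx => ?_⟩
    have hinf' := hsetinf x hx
    set n := Nat.nth (· ∈ S x) i with hn
    have hnS : n ∈ S x := Nat.nth_mem_of_infinite hinf' i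
    have hni : i ≤ n := by
      have hsm : StrictMono (Nat.nth (· ∈ S x)) := fun a c h => (Nat.nth_lt_nth hinf').mpr h
      exact hsm.le_apply
    obtain ⟨k, hkmem⟩ := Set.mem_iUnion.mp hnS
    obtain ⟨⟨i', hi', hni'⟩, hlohi⟩ := hkmem
    rw [Set.mem_Ico] at hlohi
    have hkη_le : kη ≤ k := by
      by_contra hc
      push_neg at hc
      have hmon : k + 1 ≤ kη := by omega
      have : τ (k+1) ≤ τ kη := hτmono.monotone hmon
      omega
    have hx0 : x ∈ K0 := hKsub hx
    have hdist : dist (φ k x) (ψ (nseq k i' x) x) < 1/(k+1) :=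
      hIfun k i' hi' x (hKsubW k hx0)
    rw [hni'] at hdist
    have hmono2 : (1:ℝ)/(k+1) ≤ 1/(kη+1) := by
      apply one_div_le_one_div_of_le
      · positivity
      · have : (kη:ℝ) ≤ k := by exact_mod_cast hkη_le
        linarith
    calc dist (φ 0 x) (ψ (Nat.nth (· ∈ S x) i) x)
        = dist (φ k x) (ψ n x) := by rw [hagree x hx0 k, ← hn]
      _ < 1/(k+1) := hdist
      _ ≤ 1/(kη+1) := hmono2
      _ < η := hkη
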